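/- There exist positive real constants c1 and c2 such that for every sufficiently large positive integer n, c1·n^{2/3} < n − F_{2,3}(n) ≤ n − f_{2,3}(n) < c2·n^{2/3}. -/

import Mathlib

open Finset Filter

set_option maxHeartbeats 1000000

/-- The multiset of the values of `a` can be partitioned into groups,
each consisting of `d` copies of a single number. -/
def TrivialSol (d : ℕ) {k : ℕ} (a : Fin k → ℕ) : Prop :=
  ∀ y : ℕ, d ∣ (List.ofFn a : Multiset ℕ).count y

/-- `Fkd k d n` is the maximum cardinality of a set `A ⊆ {1,…,n}` such that there are no
`a_1 < a_2 < ⋯ < a_k` in `A` and positive integer `x` with `a_1 ⋯ a_k = x ^ d`. -/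
noncomputable def Fkd (k d n : ℕ) : ℕ :=
  sSup {m : ℕ | ∃ A : Finset ℕ, A ⊆ Finset.Icc 1 n ∧ A.card = m ∧
    ∀ (a : Fin k → ℕ) (x : ℕ), (∀ i, a i ∈ A) → StrictMono a → 0 < x →
      (∏ i, a i) ≠ x ^ d}

/-- `fkd k d n` is the maximum cardinality of a set `A ⊆ {1,…,n}` such that whenever
`a_1, …, a_k ∈ A` (not necessarily distinct) and `a_1 ⋯ a_k = x ^ d` for a positive integer
`x`, the multiset of the `a_i` is trivial. -/
noncomputable def fkd (k d n : ℕ) : ℕ :=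
  sSup {m : ℕ | ∃ A : Finset ℕ, A ⊆ Finset.Icc 1 n ∧ A.card = m ∧
    ∀ (a : Fin k → ℕ) (x : ℕ), (∀ i, a i ∈ A) → 0 < x →
      (∏ i, a i) = x ^ d → TrivialSol d a}

namespace E23

lemma factorization_prod_primes (s : Finset ℕ) (hs : ∀ p ∈ s, p.Prime) (q : ℕ) :
    (∏ p ∈ s, p).factorization q = if q ∈ s then 1 else 0 := by
  rw [Nat.factorization_prod (fun p hp => (hs p hp).pos.ne')]
  rw [Finset.sum_apply']
  rw [Finset.sum_congr rfl (fun p hp => by rw [(hs p hp).factorization, Finsupp.single_apply])]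
  rw [Finset.sum_ite_eq' s q (fun _ => 1)]

/-- the product of the primes with exponent ≡ r mod 3 -/
def sfr (r m : ℕ) : ℕ := ∏ p ∈ m.primeFactors.filter (fun p => m.factorization p % 3 = r), p

lemma sfr_pos (r m : ℕ) : 0 < sfr r m :=
  Finset.prod_pos fun p hp => (Nat.prime_of_mem_primeFactors (Finset.mem_filter.1 hp).1).pos

lemma sfr_factorization (r m q : ℕ) :
    (sfr r m).factorization q =
      if q.Prime ∧ q ∣ m ∧ m ≠ 0 ∧ m.factorization q % 3 = r then 1 else 0 := by
  rw [sfr, factorization_prod_primes _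
    (fun p hp => Nat.prime_of_mem_primeFactors (Finset.mem_filter.1 hp).1)]
  congr 1
  simp only [Finset.mem_filter, Nat.mem_primeFactors, eq_iff_iff]
  tauto

lemma sfr_squarefree (r m : ℕ) : Squarefree (sfr r m) := by
  refine Nat.squarefree_of_factorization_le_one (sfr_pos r m).ne' (fun p => ?_)
  rw [sfr_factorization]
  split <;> omega

lemma prime_dvd_sfr {r m q : ℕ} (hr : r ≠ 0) (hq : q.Prime) (hm : m ≠ 0) :
    q ∣ sfr r m ↔ m.factorization q % 3 = r := by
  rw [hq.dvd_iff_one_le_factorization (sfr_pos r m).ne', sfr_factorization]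
  constructor
  · intro h
    by_contra hc
    simp [hc] at h
  · intro h
    have hdvd : q ∣ m := Nat.dvd_of_factorization_pos (by omega)
    simp [hq, hdvd, hm, h]

lemma squarefree_ext {u v : ℕ} (hu : Squarefree u) (hv : Squarefree v)
    (h : ∀ p : ℕ, p.Prime → (p ∣ u ↔ p ∣ v)) : u = v := by
  refine Nat.factorization_inj hu.ne_zero hv.ne_zero (Finsupp.ext fun p => ?_)
  by_cases hp : p.Prime
  · have h1 := hu.natFactorization_le_one p
    have h2 := hv.natFactorization_le_one p
    have := (hp.dvd_iff_one_le_factorization hu.ne_zero).symm.trans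
      ((h p hp).trans (hp.dvd_iff_one_le_factorization hv.ne_zero))
    omega
  · rw [Nat.factorization_eq_zero_of_not_prime _ hp, Nat.factorization_eq_zero_of_not_prime _ hp]


/-- the "cube part" -/
def cpart (m : ℕ) : ℕ := m.factorization.prod fun p k => p ^ (k / 3)

lemma cpart_pos (m : ℕ) : 0 < cpart m := by
  rw [cpart, Finsupp.prod]
  refine Finset.prod_pos fun p hp => pow_pos ?_ _
  exact (Nat.prime_of_mem_primeFactors (by simpa [Nat.support_factorization] using hp)).pos

lemma cpart_factorization (m q : ℕ) :
    (cpart m).factorization q = m.factorization q / 3 := by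
  rw [cpart, Finsupp.prod, Nat.factorization_prod (fun p hp => by
    exact (pow_pos (Nat.prime_of_mem_primeFactors
      (by simpa [Nat.support_factorization] using hp)).pos _).ne')]
  rw [Finset.sum_apply']
  rw [Finset.sum_congr rfl (fun p hp => by
    rw [(Nat.prime_of_mem_primeFactors
      (by simpa [Nat.support_factorization] using hp : p ∈ m.primeFactors)).factorization_pow,
      Finsupp.single_apply])]
  rw [Finset.sum_ite_eq' m.factorization.support q (fun p => m.factorization p / 3)]
  split
  · rfl
  · next h => rw [Finsupp.notMem_support_iff.1 h]; rfl

lemma decomposition (m : ℕ) (hm : m ≠ 0) :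
    (sfr 2 m) ^ 2 * (sfr 1 m) * (cpart m) ^ 3 = m := by
  have hL : (sfr 2 m) ^ 2 * (sfr 1 m) * (cpart m) ^ 3 ≠ 0 :=
    (Nat.mul_pos (Nat.mul_pos (pow_pos (sfr_pos 2 m) 2) (sfr_pos 1 m))
      (pow_pos (cpart_pos m) 3)).ne'
  refine Nat.factorization_inj hL hm (Finsupp.ext fun q => ?_)
  rw [Nat.factorization_mul (Nat.mul_pos (pow_pos (sfr_pos 2 m) 2) (sfr_pos 1 m)).ne' (pow_pos (cpart_pos m) 3).ne',
    Nat.factorization_mul (pow_pos (sfr_pos 2 m) 2).ne' (sfr_pos 1 m).ne',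
    Nat.factorization_pow, Nat.factorization_pow]
  simp only [Finsupp.coe_add, Finsupp.coe_smul, Pi.add_apply, Pi.smul_apply, smul_eq_mul]
  rw [sfr_factorization, sfr_factorization, cpart_factorization]
  by_cases hq : q.Prime
  · by_cases hd : q ∣ m
    · simp only [hq, hd, hm, ne_eq, not_false_eq_true, true_and]
      split_ifs <;> omega
    · have h0 : m.factorization q = 0 := Nat.factorization_eq_zero_of_not_dvd hd
      simp [hd, h0]
  · simp [hq, Nat.factorization_eq_zero_of_not_prime _ hq]

lemma no_cube_pair {m m' x : ℕ} (hm : m ≠ 0) (hm' : m' ≠ 0)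
    (h1 : sfr 2 m < sfr 1 m) (h2 : sfr 2 m' < sfr 1 m') (h : m * m' = x ^ 3) : False := by
  have key : ∀ q, m.factorization q + m'.factorization q = 3 * x.factorization q := by
    intro q
    have h' := congrArg Nat.factorization h
    rw [Nat.factorization_mul hm hm', Nat.factorization_pow] at h'
    have := DFunLike.congr_fun h' q
    simpa using this
  have e1 : sfr 1 m = sfr 2 m' := by
    refine squarefree_ext (sfr_squarefree _ _) (sfr_squarefree _ _) (fun p hp => ?_)
    rw [prime_dvd_sfr one_ne_zero hp hm, prime_dvd_sfr (by norm_num) hp hm']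
    have := key p
    omega
  have e2 : sfr 2 m = sfr 1 m' := by
    refine squarefree_ext (sfr_squarefree _ _) (sfr_squarefree _ _) (fun p hp => ?_)
    rw [prime_dvd_sfr (by norm_num) hp hm, prime_dvd_sfr one_ne_zero hp hm']
    have := key p
    omega
  omega


lemma fac_sq {a b : ℕ} (ha : a ≠ 0) (hb : b ≠ 0) (p : ℕ) :
    (a ^ 2 * b).factorization p = 2 * a.factorization p + b.factorization p := by
  rw [Nat.factorization_mul (pow_ne_zero 2 ha) hb, Nat.factorization_pow]
  simp [mul_comm]

lemma K1 {a b a' b' : ℕ} (ha : Squarefree a) (hb : Squarefree b)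
    (ha' : Squarefree a') (hb' : Squarefree b') (h : a ^ 2 * b = a' ^ 2 * b') :
    a = a' ∧ b = b' := by
  have key : ∀ p, 2 * a.factorization p + b.factorization p
      = 2 * a'.factorization p + b'.factorization p := by
    intro p
    rw [← fac_sq ha.ne_zero hb.ne_zero p, ← fac_sq ha'.ne_zero hb'.ne_zero p, h]
  constructor
  · refine squarefree_ext ha ha' (fun p hp => ?_)
    rw [hp.dvd_iff_one_le_factorization ha.ne_zero, hp.dvd_iff_one_le_factorization ha'.ne_zero]
    have h1 := ha.natFactorization_le_one p
    have h2 := hb.natFactorization_le_one p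
    have h3 := ha'.natFactorization_le_one p
    have h4 := hb'.natFactorization_le_one p
    have := key p; omega
  · refine squarefree_ext hb hb' (fun p hp => ?_)
    rw [hp.dvd_iff_one_le_factorization hb.ne_zero, hp.dvd_iff_one_le_factorization hb'.ne_zero]
    have h1 := ha.natFactorization_le_one p
    have h2 := hb.natFactorization_le_one p
    have h3 := ha'.natFactorization_le_one p
    have h4 := hb'.natFactorization_le_one p
    have := key p; omega

lemma K2 {a b a' b' : ℕ} (ha : Squarefree a) (hb : Squarefree b)
    (ha' : Squarefree a') (hb' : Squarefree b') (h : a ^ 2 * b = a' * b' ^ 2) :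
    a = b' ∧ b = a' := by
  have key : ∀ p, 2 * a.factorization p + b.factorization p
      = 2 * b'.factorization p + a'.factorization p := by
    intro p
    have h' : a ^ 2 * b = b' ^ 2 * a' := by linarith [h]
    rw [← fac_sq ha.ne_zero hb.ne_zero p, ← fac_sq hb'.ne_zero ha'.ne_zero p, h']
  constructor
  · refine squarefree_ext ha hb' (fun p hp => ?_)
    rw [hp.dvd_iff_one_le_factorization ha.ne_zero, hp.dvd_iff_one_le_factorization hb'.ne_zero]
    have h1 := ha.natFactorization_le_one p
    have h2 := hb.natFactorization_le_one p
    have h3 := ha'.natFactorization_le_one p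
    have h4 := hb'.natFactorization_le_one p
    have := key p; omega
  · refine squarefree_ext hb ha' (fun p hp => ?_)
    rw [hp.dvd_iff_one_le_factorization hb.ne_zero, hp.dvd_iff_one_le_factorization ha'.ne_zero]
    have h1 := ha.natFactorization_le_one p
    have h2 := hb.natFactorization_le_one p
    have h3 := ha'.natFactorization_le_one p
    have h4 := hb'.natFactorization_le_one p
    have := key p; omega

lemma strictMono_pair {u v : ℕ} (h : u < v) : StrictMono ![u, v] := by
  intro i j hij
  fin_cases i <;> fin_cases j <;> simp_all

lemma lower_bound {n N : ℕ} (hN : N ^ 3 ≤ n) (A : Finset ℕ) (hA : A ⊆ Finset.Icc 1 n)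
    (hprop : ∀ (a : Fin 2 → ℕ) (x : ℕ), (∀ i, a i ∈ A) → StrictMono a → 0 < x →
      (∏ i, a i) ≠ x ^ 3) :
    ((Icc 1 N).filter Squarefree).card * ((Icc 1 N).filter Squarefree).card
      - ((Icc 1 N).filter Squarefree).card ≤ 2 * (Icc 1 n \ A).card := by
  set SF := (Icc 1 N).filter Squarefree with hSF
  set D := Icc 1 n \ A with hD
  set ψ : ℕ × ℕ → ℕ := fun p => if p.1 ^ 2 * p.2 ∈ A then p.1 * p.2 ^ 2 else p.1 ^ 2 * p.2
    with hψ
  -- basic bounds for members of SF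
  have hmem : ∀ a b : ℕ, a ∈ SF → b ∈ SF → a ^ 2 * b ∈ Icc 1 n := by
    intro a b ha hb
    rw [hSF, mem_filter, mem_Icc] at ha hb
    rw [mem_Icc]
    constructor
    · have := Nat.mul_le_mul (Nat.pow_le_pow_left ha.1.1 2) hb.1.1
      simpa using this
    · calc a ^ 2 * b ≤ N ^ 2 * N :=
            Nat.mul_le_mul (Nat.pow_le_pow_left ha.1.2 2) hb.1.2
        _ = N ^ 3 := by ring
        _ ≤ n := hN
  have both : ∀ a b : ℕ, a ∈ SF → b ∈ SF → a < b → ¬(a ^ 2 * b ∈ A ∧ a * b ^ 2 ∈ A) := by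
    rintro a b ha hb hab ⟨h1, h2⟩
    have ha1 : 1 ≤ a := (mem_Icc.1 (mem_filter.1 ha).1).1
    have hb1 : 1 ≤ b := (mem_Icc.1 (mem_filter.1 hb).1).1
    have huv : a ^ 2 * b < a * b ^ 2 := by
      have hpos : 0 < a * b := by positivity
      calc a ^ 2 * b = a * b * a := by ring
        _ < a * b * b := mul_lt_mul_of_pos_left hab hpos
        _ = a * b ^ 2 := by ring
    refine hprop ![a ^ 2 * b, a * b ^ 2] (a * b) ?_ (strictMono_pair huv)
      (by positivity) ?_
    · intro i; fin_cases i <;> simpa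
    · rw [Fin.prod_univ_two]
      show (![a ^ 2 * b, a * b ^ 2] : Fin 2 → ℕ) 0 * _ = _
      simp only [Matrix.cons_val_zero, Matrix.cons_val_one, Matrix.head_cons]
      ring
  have both' : ∀ a b : ℕ, a ∈ SF → b ∈ SF → a ≠ b → ¬(a ^ 2 * b ∈ A ∧ a * b ^ 2 ∈ A) := by
    intro a b ha hb hab h
    rcases lt_or_gt_of_ne hab with hlt | hgt
    · exact both a b ha hb hlt h
    · refine both b a hb ha hgt ⟨?_, ?_⟩
      · have := h.2; rwa [show b ^ 2 * a = a * b ^ 2 by ring]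
      · have := h.1; rwa [show b * a ^ 2 = a ^ 2 * b by ring]
  have hψD : ∀ p ∈ SF.offDiag, ψ p ∈ D := by
    rintro ⟨a, b⟩ hp
    rw [mem_offDiag] at hp
    obtain ⟨ha, hb, hab⟩ := hp
    have hIcc1 := hmem a b ha hb
    have hIcc2 : a * b ^ 2 ∈ Icc 1 n := by
      have := hmem b a hb ha; rwa [show b ^ 2 * a = a * b ^ 2 by ring] at this
    rw [hD, Finset.mem_sdiff]
    rw [hψ]
    simp only []
    split_ifs with h1
    · exact ⟨hIcc2, fun h2 => both' a b ha hb hab ⟨h1, h2⟩⟩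
    · exact ⟨hIcc1, h1⟩
  -- fibers of ψ on offDiag have at most 2 elements
  have hcard : SF.offDiag.card ≤ 2 * (SF.offDiag.image ψ).card := by
    refine card_le_mul_card_image _ 2 (fun w hw => ?_)
    obtain ⟨p0, hp0, hwp0⟩ := mem_image.1 hw
    have hsub : SF.offDiag.filter (fun q => ψ q = w) ⊆ {p0, p0.swap} := by
      rintro ⟨a, b⟩ hq
      rw [mem_filter] at hq
      obtain ⟨hqd, hqw⟩ := hq
      rw [mem_offDiag] at hqd
      obtain ⟨haq, hbq, habq⟩ := hqd
      have hp0d := mem_offDiag.1 hp0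
      obtain ⟨ha0, hb0, hab0⟩ := hp0d
      have hsa : Squarefree a := (mem_filter.1 haq).2
      have hsb : Squarefree b := (mem_filter.1 hbq).2
      have hsa0 : Squarefree p0.1 := (mem_filter.1 ha0).2
      have hsb0 : Squarefree p0.2 := (mem_filter.1 hb0).2
      have heq : ψ (a, b) = ψ p0 := by rw [hqw, hwp0]
      rw [hψ] at heq
      simp only [] at heq
      rw [mem_insert, mem_singleton]
      have hcase : a ^ 2 * b = p0.1 ^ 2 * p0.2 ∨ a ^ 2 * b = p0.1 * p0.2 ^ 2 ∨
          a * b ^ 2 = p0.1 ^ 2 * p0.2 ∨ a * b ^ 2 = p0.1 * p0.2 ^ 2 := by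
        split_ifs at heq <;> tauto
      rcases hcase with h | h | h | h
      · left
        obtain ⟨e1, e2⟩ := K1 hsa hsb hsa0 hsb0 h
        rw [Prod.ext_iff]; exact ⟨e1, e2⟩
      · right
        obtain ⟨e1, e2⟩ := K2 hsa hsb hsa0 hsb0 h
        rw [Prod.ext_iff]; exact ⟨e1, e2⟩
      · right
        obtain ⟨e1, e2⟩ := K2 hsa0 hsb0 hsa hsb h.symm
        rw [Prod.ext_iff]
        exact ⟨e2.symm, e1.symm⟩
      · left
        have h' : b ^ 2 * a = p0.2 ^ 2 * p0.1 := by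
          rw [mul_comm (b ^ 2) a, mul_comm (p0.2 ^ 2) p0.1]; exact h
        obtain ⟨e1, e2⟩ := K1 hsb hsa hsb0 hsa0 h'
        rw [Prod.ext_iff]
        exact ⟨e2, e1⟩
    calc (SF.offDiag.filter (fun q => ψ q = w)).card ≤ ({p0, p0.swap} : Finset (ℕ × ℕ)).card :=
          card_le_card hsub
      _ ≤ 2 := card_insert_le _ _ |>.trans (by simp)
  have himg : SF.offDiag.image ψ ⊆ D := by
    intro w hw
    obtain ⟨p, hp, rfl⟩ := mem_image.1 hw
    exact hψD p hp
  calc SF.card * SF.card - SF.card = SF.offDiag.card := (offDiag_card SF).symm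
    _ ≤ 2 * (SF.offDiag.image ψ).card := hcard
    _ ≤ 2 * D.card := Nat.mul_le_mul_left 2 (card_le_card himg)

lemma sum_inv_sq_aux : ∀ K : ℕ, 1 ≤ K → ∑ k ∈ Icc 1 K, (1:ℝ)/(k:ℝ)^2 ≤ 2 - 1/K := by
  refine Nat.le_induction ?_ ?_
  · norm_num
  · intro K hK ih
    rw [← Finset.insert_Icc_right_eq_Icc_add_one (by omega), Finset.sum_insert (by simp)]
    have hK1 : (1:ℝ) ≤ (K:ℝ) := by exact_mod_cast hK
    have h1 : (1:ℝ)/((K:ℝ)+1)^2 ≤ 1/K - 1/(K+1) := by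
      rw [div_sub_div _ _ (by positivity) (by positivity)]
      rw [div_le_div_iff₀ (by positivity) (by positivity)]
      ring_nf
      nlinarith
    push_cast
    linarith
lemma sum_inv_sq (K : ℕ) : ∑ k ∈ Icc 1 K, (1:ℝ)/(k:ℝ)^2 ≤ 2 := by
  rcases Nat.eq_zero_or_pos K with rfl | hK
  · simp
  · have := sum_inv_sq_aux K hK
    have : (0:ℝ) < 1/K := by positivity
    linarith [sum_inv_sq_aux K hK]

lemma sum_inv_sq2_aux : ∀ K : ℕ, 3 ≤ K → ∑ k ∈ Icc 2 K, (1:ℝ)/(k:ℝ)^2 ≤ 25/36 - 1/K := by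
  refine Nat.le_induction ?_ ?_
  · rw [show Finset.Icc 2 3 = {2, 3} from rfl]
    norm_num
  · intro K hK ih
    rw [← Finset.insert_Icc_right_eq_Icc_add_one (by omega), Finset.sum_insert (by simp)]
    have hK1 : (1:ℝ) ≤ (K:ℝ) := by exact_mod_cast le_trans (by norm_num) hK
    have h1 : (1:ℝ)/((K:ℝ)+1)^2 ≤ 1/K - 1/(K+1) := by
      rw [div_sub_div _ _ (by positivity) (by positivity)]
      rw [div_le_div_iff₀ (by positivity) (by positivity)]
      ring_nf
      nlinarith
    push_cast
    linarith
lemma sum_inv_sq2 (K : ℕ) : ∑ k ∈ Icc 2 K, (1:ℝ)/(k:ℝ)^2 ≤ 25/36 := by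
  rcases lt_or_ge K 3 with hK | hK
  · interval_cases K <;> norm_num [show Finset.Icc 2 2 = {2} from rfl]
  · have h0 : (0:ℝ) < 1/K := by positivity
    linarith [sum_inv_sq2_aux K hK]

lemma sum_inv_sqrt : ∀ K : ℕ, ∑ k ∈ Icc 1 K, (1:ℝ)/Real.sqrt k ≤ 2 * Real.sqrt K := by
  intro K
  induction K with
  | zero => simp
  | succ K ih =>
    rw [← Finset.insert_Icc_right_eq_Icc_add_one (by omega), Finset.sum_insert (by simp)]
    have hu : Real.sqrt K ^ 2 = K := Real.sq_sqrt (by positivity)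
    have hv : Real.sqrt (K+1) ^ 2 = (K:ℝ)+1 := by
      rw [Real.sq_sqrt (by positivity)]
    have hv0 : 0 < Real.sqrt ((K:ℕ)+1 : ℕ) := by
      rw [Real.sqrt_pos]; push_cast; positivity
    have hu0 : 0 ≤ Real.sqrt K := Real.sqrt_nonneg _
    have hinv : 1/Real.sqrt ((K:ℕ)+1:ℕ) * Real.sqrt ((K:ℕ)+1:ℕ) = 1 := by
      field_simp
    push_cast at *
    nlinarith [sq_nonneg (Real.sqrt ((K:ℝ)+1) - Real.sqrt K)]


lemma sqfree_count (N : ℕ) :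
    (11:ℝ)/36 * N ≤ (((Icc 1 N).filter Squarefree).card : ℝ) := by
  have hsplit := Finset.card_filter_add_card_filter_not (s := Icc 1 N)
    (p := Squarefree)
  have hcover : (Icc 1 N).filter (fun m => ¬ Squarefree m) ⊆
      (Icc 2 N).biUnion (fun k => (Icc 1 N).filter (fun m => k^2 ∣ m)) := by
    intro m hm
    rw [mem_filter, mem_Icc] at hm
    obtain ⟨⟨hm1, hmN⟩, hnsq⟩ := hm
    rw [Squarefree] at hnsq
    push_neg at hnsq
    obtain ⟨x, hxd, hxu⟩ := hnsq
    have hx0 : x ≠ 0 := by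
      rintro rfl
      simp only [Nat.zero_mul, Nat.zero_dvd] at hxd
      omega
    have hx1 : x ≠ 1 := by rintro rfl; exact hxu isUnit_one
    have hxm : x * x ≤ m := Nat.le_of_dvd (by omega) hxd
    rw [mem_biUnion]
    refine ⟨x, ?_, ?_⟩
    · rw [mem_Icc]
      constructor
      · omega
      · nlinarith
    · rw [mem_filter, mem_Icc]
      exact ⟨⟨hm1, hmN⟩, by rwa [pow_two]⟩
  have hcard1 : ((Icc 1 N).filter (fun m => ¬ Squarefree m)).card
      ≤ ∑ k ∈ Icc 2 N, ((Icc 1 N).filter (fun m => k^2 ∣ m)).card :=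
    le_trans (card_le_card hcover) (card_biUnion_le)
  have hdiv : ∀ k ∈ Icc 2 N, (((Icc 1 N).filter (fun m => k^2 ∣ m)).card : ℝ)
      ≤ (N:ℝ) * (1/(k:ℝ)^2) := by
    intro k hk
    rw [mem_Icc] at hk
    have hIcc : Icc 1 N = Ioc 0 N := by ext x; simp [Nat.lt_iff_add_one_le]
    rw [hIcc, Nat.Ioc_filter_dvd_card_eq_div]
    calc ((N / k^2 : ℕ) : ℝ) ≤ (N:ℝ)/(k:ℝ)^2 := by
          push_cast [Nat.cast_div_le]
          exact_mod_cast Nat.cast_div_le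
      _ = (N:ℝ) * (1/(k:ℝ)^2) := by ring
  have hns : (((Icc 1 N).filter (fun m => ¬ Squarefree m)).card : ℝ) ≤ (25:ℝ)/36 * N := by
    calc (((Icc 1 N).filter (fun m => ¬ Squarefree m)).card : ℝ)
        ≤ ∑ k ∈ Icc 2 N, (((Icc 1 N).filter (fun m => k^2 ∣ m)).card : ℝ) := by
          exact_mod_cast hcard1
      _ ≤ ∑ k ∈ Icc 2 N, (N:ℝ) * (1/(k:ℝ)^2) := Finset.sum_le_sum hdiv
      _ = (N:ℝ) * ∑ k ∈ Icc 2 N, (1/(k:ℝ)^2) := by rw [Finset.mul_sum]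
      _ ≤ (N:ℝ) * (25/36) := by
          refine mul_le_mul_of_nonneg_left (sum_inv_sq2 N) (by positivity)
      _ = 25/36 * N := by ring
  have hNcard : ((Icc 1 N).card : ℝ) = N := by rw [Nat.card_Icc]; simp
  have := congrArg (fun x : ℕ => (x:ℝ)) hsplit
  simp only [Nat.cast_add] at this
  rw [hNcard] at this
  linarith

lemma pairs_bound (L t n : ℕ) (ht : 1 ≤ t) :
    (((Icc 1 L ×ˢ Icc 1 L).filter
      (fun p : ℕ × ℕ => p.2 ≤ p.1 ∧ p.1 ^ 2 * p.2 * t ^ 3 ≤ n)).card : ℝ)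
      ≤ 2 * ((n : ℝ) / (t : ℝ) ^ 3) ^ ((2:ℝ)/3) := by
  set M : ℝ := (n : ℝ) / (t : ℝ) ^ 3 with hMdef
  have ht0 : (0:ℝ) < (t:ℝ) ^ 3 := by positivity
  have hM0 : 0 ≤ M := by positivity
  set B : ℕ := ⌊M ^ ((1:ℝ)/3)⌋₊ with hBdef
  have hBM : (B : ℝ) ≤ M ^ ((1:ℝ)/3) := Nat.floor_le (by positivity)
  have hsub : (Icc 1 L ×ˢ Icc 1 L).filter
      (fun p : ℕ × ℕ => p.2 ≤ p.1 ∧ p.1 ^ 2 * p.2 * t ^ 3 ≤ n) ⊆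
      (Icc 1 B).biUnion (fun b =>
        (Icc 1 (⌊Real.sqrt (M / b)⌋₊)).image (fun a => (a, b))) := by
    rintro ⟨a, b⟩ hp
    rw [mem_filter, mem_product, mem_Icc, mem_Icc] at hp
    obtain ⟨⟨⟨ha1, haL⟩, hb1, hbL⟩, hba, habt⟩ := hp
    have hreal : ((a:ℝ))^2 * b * (t:ℝ)^3 ≤ n := by exact_mod_cast habt
    have hab2 : ((a:ℝ))^2 * b ≤ M := by
      rw [hMdef, le_div_iff₀ ht0]
      exact hreal
    have hb0 : (0:ℝ) < (b:ℝ) := by exact_mod_cast hb1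
    have ha0 : (0:ℝ) ≤ (a:ℝ) := by positivity
    have hbr : (b:ℝ) ≤ a := by exact_mod_cast hba
    have hb3 : ((b:ℝ))^3 ≤ M := by
      have hba2 : (b:ℝ)^2 ≤ (a:ℝ)^2 := by nlinarith
      nlinarith [mul_le_mul_of_nonneg_right hba2 (le_of_lt hb0)]
    have hbB : b ≤ B := by
      rw [hBdef]
      refine Nat.le_floor ?_
      have h1 : ((b:ℝ)^3) ^ ((1:ℝ)/3) ≤ M ^ ((1:ℝ)/3) :=
        Real.rpow_le_rpow (by positivity) hb3 (by norm_num)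
      have h2 : ((b:ℝ)^3) ^ ((1:ℝ)/3) = (b:ℝ) := by
        rw [← Real.rpow_natCast (b:ℝ) 3, ← Real.rpow_mul (le_of_lt hb0)]
        norm_num
      linarith
    have haB : a ≤ ⌊Real.sqrt (M / b)⌋₊ := by
      refine Nat.le_floor ?_
      rw [show Real.sqrt (M/b) = Real.sqrt (M/b) from rfl]
      refine Real.le_sqrt' (by exact_mod_cast ha1) |>.2 ?_
      rw [le_div_iff₀ hb0]
      nlinarith
    rw [mem_biUnion]
    exact ⟨b, mem_Icc.2 ⟨hb1, hbB⟩, mem_image.2 ⟨a, mem_Icc.2 ⟨ha1, haB⟩, rfl⟩⟩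
  have hcard : ((Icc 1 L ×ˢ Icc 1 L).filter
      (fun p : ℕ × ℕ => p.2 ≤ p.1 ∧ p.1 ^ 2 * p.2 * t ^ 3 ≤ n)).card
      ≤ ∑ b ∈ Icc 1 B, (⌊Real.sqrt (M / b)⌋₊ + 1 - 1) := by
    refine le_trans (card_le_card hsub) (le_trans card_biUnion_le ?_)
    refine Finset.sum_le_sum fun b _ => ?_
    refine le_trans card_image_le ?_
    rw [Nat.card_Icc]
  have hstep : (∑ b ∈ Icc 1 B, ((⌊Real.sqrt (M / b)⌋₊ + 1 - 1) : ℕ) : ℝ)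
      ≤ Real.sqrt M * (2 * Real.sqrt B) := by
    push_cast
    calc ∑ b ∈ Icc 1 B, ((⌊Real.sqrt (M / (b:ℝ))⌋₊ : ℝ))
        ≤ ∑ b ∈ Icc 1 B, Real.sqrt M * (1 / Real.sqrt b) := by
          refine Finset.sum_le_sum fun b hb => ?_
          have hb1 : 1 ≤ b := (mem_Icc.1 hb).1
          have hb0 : (0:ℝ) < (b:ℝ) := by exact_mod_cast hb1
          calc ((⌊Real.sqrt (M / (b:ℝ))⌋₊ : ℝ)) ≤ Real.sqrt (M / b) :=
                Nat.floor_le (Real.sqrt_nonneg _)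
            _ = Real.sqrt M / Real.sqrt b := Real.sqrt_div hM0 _
            _ = Real.sqrt M * (1 / Real.sqrt b) := by ring
      _ = Real.sqrt M * ∑ b ∈ Icc 1 B, (1 / Real.sqrt b) := by rw [Finset.mul_sum]
      _ ≤ Real.sqrt M * (2 * Real.sqrt B) := by
          refine mul_le_mul_of_nonneg_left (sum_inv_sqrt B) (Real.sqrt_nonneg _)
  have hfinal : Real.sqrt M * (2 * Real.sqrt B) ≤ 2 * M ^ ((2:ℝ)/3) := by
    have h1 : Real.sqrt (B:ℝ) ≤ M ^ ((1:ℝ)/6) := by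
      calc Real.sqrt (B:ℝ) ≤ Real.sqrt (M ^ ((1:ℝ)/3)) := Real.sqrt_le_sqrt hBM
        _ = (M ^ ((1:ℝ)/3)) ^ ((1:ℝ)/2) := Real.sqrt_eq_rpow _
        _ = M ^ ((1:ℝ)/6) := by
            rw [← Real.rpow_mul hM0]
            norm_num
    have h2 : Real.sqrt M = M ^ ((1:ℝ)/2) := Real.sqrt_eq_rpow _
    have h3 : M ^ ((1:ℝ)/2) * M ^ ((1:ℝ)/6) = M ^ ((2:ℝ)/3) := by
      rw [← Real.rpow_add' hM0 (by norm_num)]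
      norm_num
    calc Real.sqrt M * (2 * Real.sqrt B) = 2 * (Real.sqrt M * Real.sqrt B) := by ring
      _ ≤ 2 * (M ^ ((1:ℝ)/2) * M ^ ((1:ℝ)/6)) := by
          refine mul_le_mul_of_nonneg_left ?_ (by norm_num)
          refine mul_le_mul (le_of_eq h2) h1 (Real.sqrt_nonneg _) (by positivity)
      _ = 2 * M ^ ((2:ℝ)/3) := by rw [h3]
  calc (((Icc 1 L ×ˢ Icc 1 L).filter
      (fun p : ℕ × ℕ => p.2 ≤ p.1 ∧ p.1 ^ 2 * p.2 * t ^ 3 ≤ n)).card : ℝ)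
      ≤ (∑ b ∈ Icc 1 B, ((⌊Real.sqrt (M / b)⌋₊ + 1 - 1) : ℕ) : ℝ) := by exact_mod_cast hcard
    _ ≤ Real.sqrt M * (2 * Real.sqrt B) := hstep
    _ ≤ 2 * M ^ ((2:ℝ)/3) := hfinal

lemma upper_card (n : ℕ) (hn : 1 ≤ n) :
    ((((Icc 1 n).filter (fun m => ¬ sfr 2 m < sfr 1 m)).card) : ℝ)
      ≤ 4 * (n:ℝ) ^ ((2:ℝ)/3) := by
  set R := (Icc 1 n).filter (fun m => ¬ sfr 2 m < sfr 1 m) with hR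
  have hsub : R ⊆ (Icc 1 n).biUnion (fun t =>
      ((Icc 1 n ×ˢ Icc 1 n).filter
        (fun p : ℕ × ℕ => p.2 ≤ p.1 ∧ p.1 ^ 2 * p.2 * t ^ 3 ≤ n)).image
        (fun p => p.1 ^ 2 * p.2 * t ^ 3)) := by
    intro m hm
    rw [hR, mem_filter, mem_Icc] at hm
    obtain ⟨⟨hm1, hmn⟩, hk⟩ := hm
    have hm0 : m ≠ 0 := by omega
    set a := sfr 2 m with hadef
    set b := sfr 1 m with hbdef
    set t := cpart m with htdef
    have hd := decomposition m hm0
    rw [← hadef, ← hbdef, ← htdef] at hd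
    have ha1 : 1 ≤ a := sfr_pos 2 m
    have hb1 : 1 ≤ b := sfr_pos 1 m
    have ht1 : 1 ≤ t := cpart_pos m
    have ham : a ≤ m := by
      calc a = a * 1 := (mul_one a).symm
        _ ≤ a * (a * b * t ^ 3) := Nat.mul_le_mul_left a (Nat.mul_pos (Nat.mul_pos ha1 hb1) (pow_pos ht1 3))
        _ = a ^ 2 * b * t ^ 3 := by ring
        _ = m := hd
    have hbm : b ≤ m := by
      calc b = 1 * b := (one_mul b).symm
        _ ≤ (a ^ 2 * t ^ 3) * b := Nat.mul_le_mul_right b (Nat.mul_pos (pow_pos ha1 2) (pow_pos ht1 3))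
        _ = a ^ 2 * b * t ^ 3 := by ring
        _ = m := hd
    have htm : t ≤ m := by
      calc t = 1 * t := (one_mul t).symm
        _ ≤ (a ^ 2 * b * t ^ 2) * t := Nat.mul_le_mul_right t (Nat.mul_pos (Nat.mul_pos (pow_pos ha1 2) hb1) (pow_pos ht1 2))
        _ = a ^ 2 * b * t ^ 3 := by ring
        _ = m := hd
    rw [mem_biUnion]
    refine ⟨t, mem_Icc.2 ⟨ht1, le_trans htm hmn⟩, ?_⟩
    rw [mem_image]
    refine ⟨(a, b), ?_, by rw [hd]⟩
    rw [mem_filter, mem_product, mem_Icc, mem_Icc]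
    refine ⟨⟨⟨ha1, le_trans ham hmn⟩, hb1, le_trans hbm hmn⟩, by omega, ?_⟩
    rw [hd]; exact hmn
  have hcard : (R.card : ℝ) ≤ ∑ t ∈ Icc 1 n,
      ((((Icc 1 n ×ˢ Icc 1 n).filter
        (fun p : ℕ × ℕ => p.2 ≤ p.1 ∧ p.1 ^ 2 * p.2 * t ^ 3 ≤ n)).card) : ℝ) := by
    have h1 : R.card ≤ ∑ t ∈ Icc 1 n,
        (((Icc 1 n ×ˢ Icc 1 n).filter
          (fun p : ℕ × ℕ => p.2 ≤ p.1 ∧ p.1 ^ 2 * p.2 * t ^ 3 ≤ n)).image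
          (fun p => p.1 ^ 2 * p.2 * t ^ 3)).card :=
      le_trans (card_le_card hsub) card_biUnion_le
    have h2 : R.card ≤ ∑ t ∈ Icc 1 n,
        (((Icc 1 n ×ˢ Icc 1 n).filter
          (fun p : ℕ × ℕ => p.2 ≤ p.1 ∧ p.1 ^ 2 * p.2 * t ^ 3 ≤ n)).card) :=
      le_trans h1 (Finset.sum_le_sum fun t _ => card_image_le)
    exact_mod_cast h2
  have hpow : ∀ t : ℕ, 1 ≤ t → ((n:ℝ)/(t:ℝ)^3) ^ ((2:ℝ)/3)
      = (n:ℝ) ^ ((2:ℝ)/3) * (1/(t:ℝ)^2) := by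
    intro t ht
    have ht0 : (0:ℝ) < (t:ℝ) := by exact_mod_cast ht
    rw [Real.div_rpow (by positivity) (by positivity)]
    have h3 : ((t:ℝ)^(3:ℕ)) ^ ((2:ℝ)/3) = (t:ℝ)^(2:ℕ) := by
      rw [← Real.rpow_natCast (t:ℝ) 3, ← Real.rpow_mul (le_of_lt ht0)]
      rw [show ((3:ℕ):ℝ) * ((2:ℝ)/3) = ((2:ℕ):ℝ) by norm_num]
      rw [Real.rpow_natCast]
    rw [h3]
    ring
  calc (R.card : ℝ) ≤ ∑ t ∈ Icc 1 n,
      ((((Icc 1 n ×ˢ Icc 1 n).filter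
        (fun p : ℕ × ℕ => p.2 ≤ p.1 ∧ p.1 ^ 2 * p.2 * t ^ 3 ≤ n)).card) : ℝ) := hcard
    _ ≤ ∑ t ∈ Icc 1 n, 2 * ((n:ℝ)/(t:ℝ)^3) ^ ((2:ℝ)/3) := by
        refine Finset.sum_le_sum fun t htt => pairs_bound n t n (mem_Icc.1 htt).1
    _ = ∑ t ∈ Icc 1 n, 2 * (n:ℝ) ^ ((2:ℝ)/3) * (1/(t:ℝ)^2) := by
        refine Finset.sum_congr rfl fun t htt => ?_
        rw [hpow t (mem_Icc.1 htt).1]; ring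
    _ = 2 * (n:ℝ) ^ ((2:ℝ)/3) * ∑ t ∈ Icc 1 n, (1/(t:ℝ)^2) := by rw [← Finset.mul_sum]
    _ ≤ 2 * (n:ℝ) ^ ((2:ℝ)/3) * 2 := by
        refine mul_le_mul_of_nonneg_left (sum_inv_sq n) (by positivity)
    _ = 4 * (n:ℝ) ^ ((2:ℝ)/3) := by ring

lemma trivial_absurd (a : Fin 2 → ℕ) (h : TrivialSol 3 a) : False := by
  have h0 := h (a 0)
  have hofn : (List.ofFn a) = [a 0, a 1] := by
    simp [List.ofFn_succ]
  rw [hofn] at h0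
  by_cases h01 : a 1 = a 0 <;> simp [List.count_cons, h01] at h0 <;> omega

def SetF (n : ℕ) : Set ℕ := {m : ℕ | ∃ A : Finset ℕ, A ⊆ Finset.Icc 1 n ∧ A.card = m ∧
    ∀ (a : Fin 2 → ℕ) (x : ℕ), (∀ i, a i ∈ A) → StrictMono a → 0 < x →
      (∏ i, a i) ≠ x ^ 3}
def Setf (n : ℕ) : Set ℕ := {m : ℕ | ∃ A : Finset ℕ, A ⊆ Finset.Icc 1 n ∧ A.card = m ∧
    ∀ (a : Fin 2 → ℕ) (x : ℕ), (∀ i, a i ∈ A) → 0 < x →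
      (∏ i, a i) = x ^ 3 → TrivialSol 3 a}

lemma FkdEq (n : ℕ) : Fkd 2 3 n = sSup (SetF n) := rfl
lemma fkdEq (n : ℕ) : fkd 2 3 n = sSup (Setf n) := rfl

lemma zero_mem_SetF (n : ℕ) : 0 ∈ SetF n :=
  ⟨∅, empty_subset _, card_empty, fun a x hmem _ _ => absurd (hmem 0) (notMem_empty _)⟩
lemma zero_mem_Setf (n : ℕ) : 0 ∈ Setf n :=
  ⟨∅, empty_subset _, card_empty, fun a x hmem _ _ => absurd (hmem 0) (notMem_empty _)⟩
lemma bdd_SetF (n : ℕ) : BddAbove (SetF n) := by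
  refine ⟨n, fun m hm => ?_⟩
  obtain ⟨A, hsub, hcard, _⟩ := hm
  have := card_le_card hsub
  rw [hcard, Nat.card_Icc] at this
  omega
lemma bdd_Setf (n : ℕ) : BddAbove (Setf n) := by
  refine ⟨n, fun m hm => ?_⟩
  obtain ⟨A, hsub, hcard, _⟩ := hm
  have := card_le_card hsub
  rw [hcard, Nat.card_Icc] at this
  omega

lemma fkd_le_Fkd (n : ℕ) : fkd 2 3 n ≤ Fkd 2 3 n := by
  rw [FkdEq, fkdEq]
  refine csSup_le_csSup (bdd_SetF n) ⟨0, zero_mem_Setf n⟩ ?_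
  rintro m ⟨A, hsub, hcard, hprop⟩
  refine ⟨A, hsub, hcard, fun a x hmem _ hx hprod => ?_⟩
  exact trivial_absurd a (hprop a x hmem hx hprod)


lemma upper_chain (n : ℕ) (hn : 1 ≤ n) :
    (n : ℝ) - (fkd 2 3 n : ℝ) < 5 * (n : ℝ) ^ ((2:ℝ)/3) := by
  set A := (Icc 1 n).filter (fun m => sfr 2 m < sfr 1 m) with hAdef
  set R := (Icc 1 n).filter (fun m => ¬ sfr 2 m < sfr 1 m) with hRdef
  have hmemf : A.card ∈ Setf n := by
    refine ⟨A, filter_subset _ _, rfl, fun a x hmem hx heq => ?_⟩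
    exfalso
    have h0 := mem_filter.1 (hmem 0)
    have h1 := mem_filter.1 (hmem 1)
    have hm0 : a 0 ≠ 0 := by
      have := (mem_Icc.1 h0.1).1; omega
    have hm1 : a 1 ≠ 0 := by
      have := (mem_Icc.1 h1.1).1; omega
    rw [Fin.prod_univ_two] at heq
    exact no_cube_pair hm0 hm1 h0.2 h1.2 heq
  have hfkd_ge : A.card ≤ fkd 2 3 n := by
    rw [fkdEq]
    exact le_csSup (bdd_Setf n) hmemf
  have hAR : A.card + R.card = n := by
    rw [hAdef, hRdef]
    rw [Finset.card_filter_add_card_filter_not (p := fun m => sfr 2 m < sfr 1 m)]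
    rw [Nat.card_Icc]
    omega
  have hcardR := upper_card n hn
  have hARR : (A.card : ℝ) + R.card = n := by exact_mod_cast hAR
  have hfkdR : (A.card : ℝ) ≤ fkd 2 3 n := by exact_mod_cast hfkd_ge
  have hpow : (0:ℝ) < (n:ℝ) ^ ((2:ℝ)/3) :=
    Real.rpow_pos_of_pos (by exact_mod_cast hn) _
  rw [← hRdef] at hcardR
  linarith

lemma lower_chain (n : ℕ) (hn : 1000000 ≤ n) :
    (1/1000 : ℝ) * (n : ℝ) ^ ((2:ℝ)/3) < (n : ℝ) - (Fkd 2 3 n : ℝ) := by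
  set u : ℝ := (n:ℝ) ^ ((1:ℝ)/3) with hudef
  have hu0 : 0 ≤ u := by positivity
  have hu100 : (100:ℝ) ≤ u := by
    have h1 : ((10:ℝ)^6) ^ ((1:ℝ)/3) ≤ (n:ℝ) ^ ((1:ℝ)/3) := by
      refine Real.rpow_le_rpow (by positivity) ?_ (by norm_num)
      have : ((1000000:ℕ):ℝ) ≤ (n:ℝ) := by exact_mod_cast hn
      push_cast at this
      norm_num
      linarith
    have heq : ((10:ℝ)^6) ^ ((1:ℝ)/3) = 100 := by
      rw [show (10:ℝ)^6 = (100:ℝ)^(3:ℕ) by norm_num,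
        ← Real.rpow_natCast (100:ℝ) 3, ← Real.rpow_mul (by norm_num)]
      norm_num
    linarith [heq ▸ h1]
  set N : ℕ := ⌊u⌋₊ with hNdef
  have hNu : u - 1 < (N:ℝ) := Nat.sub_one_lt_floor u
  have hNu' : (N:ℝ) ≤ u := Nat.floor_le hu0
  have hu3 : u ^ (3:ℕ) = (n:ℝ) := by
    rw [hudef, ← Real.rpow_natCast ((n:ℝ) ^ ((1:ℝ)/3)) 3, ← Real.rpow_mul (by positivity)]
    norm_num
  have hN3 : N ^ 3 ≤ n := by
    have hr : ((N:ℝ))^(3:ℕ) ≤ (n:ℝ) := by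
      calc ((N:ℝ))^(3:ℕ) ≤ u^(3:ℕ) := by
            exact pow_le_pow_left₀ (by positivity) hNu' 3
        _ = (n:ℝ) := hu3
    exact_mod_cast hr
  set S : ℕ := ((Icc 1 N).filter Squarefree).card with hSdef
  have hSR : (11:ℝ)/36 * N ≤ (S:ℝ) := sqfree_count N
  have hS30 : (30:ℝ) ≤ (S:ℝ) := by linarith
  have hS1 : 1 ≤ S := by exact_mod_cast (by linarith : (1:ℝ) ≤ (S:ℝ))
  have hSS : S ≤ S * S := Nat.le_mul_of_pos_left S hS1
  set m₀ : ℕ := (S * S - S) / 2 with hm₀def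
  have hkey : ∀ m ∈ SetF n, m ≤ n - m₀ := by
    rintro m ⟨A, hsub, hcard, hprop⟩
    have hlb := lower_bound hN3 A hsub hprop
    rw [← hSdef] at hlb
    have hsd : (Icc 1 n \ A).card = n - A.card := by
      rw [card_sdiff_of_subset hsub, Nat.card_Icc]
      omega
    have hAn : A.card ≤ n := by
      have := card_le_card hsub
      rw [Nat.card_Icc] at this
      omega
    rw [hsd] at hlb
    omega
  have hm₀n : m₀ ≤ n := by
    have hlb := lower_bound hN3 ∅ (empty_subset _)
      (fun a x hmem _ _ => absurd (hmem 0) (notMem_empty _))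
    rw [← hSdef, sdiff_empty, Nat.card_Icc] at hlb
    omega
  have hFkd : Fkd 2 3 n ≤ n - m₀ := by
    rw [FkdEq]
    exact csSup_le ⟨0, zero_mem_SetF n⟩ hkey
  have hFkdR : (Fkd 2 3 n : ℝ) ≤ (n:ℝ) - (m₀:ℝ) := by
    have h1 : ((Fkd 2 3 n : ℕ) : ℝ) ≤ ((n - m₀ : ℕ) : ℝ) := by exact_mod_cast hFkd
    rwa [Nat.cast_sub hm₀n] at h1
  have h2m : S * S - S ≤ 2 * m₀ + 1 := by omega
  have h2mR : (S:ℝ) * S - S ≤ 2 * (m₀:ℝ) + 1 := by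
    have h3 : ((S * S - S : ℕ) : ℝ) ≤ ((2 * m₀ + 1 : ℕ) : ℝ) := by exact_mod_cast h2m
    rw [Nat.cast_sub hSS] at h3
    push_cast at h3
    linarith
  have hu2 : (n:ℝ) ^ ((2:ℝ)/3) = u^(2:ℕ) := by
    rw [hudef, ← Real.rpow_natCast ((n:ℝ) ^ ((1:ℝ)/3)) 2, ← Real.rpow_mul (by positivity)]
    norm_num
  rw [hu2]
  have hgoal : (1/1000 : ℝ) * u^(2:ℕ) < (m₀:ℝ) := by
    have hSu : (11:ℝ)/36 * (u - 1) ≤ (S:ℝ) := by linarith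
    have hSpos : (0:ℝ) ≤ (S:ℝ) := by positivity
    have hSu0 : (0:ℝ) ≤ (11:ℝ)/36 * (u - 1) := by linarith
    have hsq := mul_le_mul hSu hSu hSu0 hSpos
    nlinarith [hsq, hu100, hS30, h2mR]
  linarith


end E23

theorem stmt_0 : ∃ c1 c2 : ℝ, 0 < c1 ∧ 0 < c2 ∧ ∀ᶠ n : ℕ in Filter.atTop,
    c1 * (n : ℝ) ^ ((2 : ℝ)/3) < (n : ℝ) - (Fkd 2 3 n : ℝ) ∧
    (n : ℝ) - (Fkd 2 3 n : ℝ) ≤ (n : ℝ) - (fkd 2 3 n : ℝ) ∧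
    (n : ℝ) - (fkd 2 3 n : ℝ) < c2 * (n : ℝ) ^ ((2 : ℝ)/3) := by
  refine ⟨1/1000, 5, by norm_num, by norm_num, ?_⟩
  filter_upwards [eventually_ge_atTop 1000000] with n hn
  have hn1 : 1 ≤ n := by omega
  refine ⟨E23.lower_chain n hn, ?_, E23.upper_chain n hn1⟩
  have := E23.fkd_le_Fkd n
  have hR : (fkd 2 3 n : ℝ) ≤ (Fkd 2 3 n : ℝ) := by exact_mod_cast this
  linarith
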